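/- Every n×n matrix with entries in {0,1} has absolute determinant at most 2·((n+1)/4)^((n+1)/2). -/

import Mathlib

open Matrix Module
open scoped RealInnerProductSpace

lemma hadamard_aux (m : ℕ) (f : Fin m → EuclideanSpace ℝ (Fin m)) :
    |(EuclideanSpace.basisFun (Fin m) ℝ).toBasis.det f| ≤ ∏ i, ‖f i‖ := by
  have h : finrank ℝ (EuclideanSpace ℝ (Fin m)) = Fintype.card (Fin m) := by simp
  set b := (EuclideanSpace.basisFun (Fin m) ℝ)
  haveI : WellFoundedLT (Fin m) := inferInstance
  set e : OrthonormalBasis (Fin m) ℝ (EuclideanSpace ℝ (Fin m)) := InnerProductSpace.gramSchmidtOrthonormalBasis (𝕜 := ℝ) h f with he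
  have h1 : b.toBasis.det = (b.toBasis.det ⇑e.toBasis) • e.toBasis.det :=
    b.toBasis.det.eq_smul_basis_det e.toBasis
  have h2 : ‖b.toBasis.det ⇑e.toBasis‖ = 1 := b.det_to_matrix_orthonormalBasis e
  have h3 : e.toBasis.det f = ∏ i, ⟪e i, f i⟫ := InnerProductSpace.gramSchmidtOrthonormalBasis_det h f
  have h4 : b.toBasis.det f = b.toBasis.det ⇑e.toBasis * e.toBasis.det f := by
    conv_lhs => rw [h1]
    rfl
  calc |b.toBasis.det f| = ‖b.toBasis.det ⇑e.toBasis‖ * |e.toBasis.det f| := by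
        rw [h4, abs_mul, Real.norm_eq_abs]
    _ = |∏ i, ⟪e i, f i⟫| := by rw [h2, one_mul, h3]
    _ = ∏ i, |⟪e i, f i⟫| := by rw [Finset.abs_prod]
    _ ≤ ∏ i, ‖f i‖ := Finset.prod_le_prod (fun _ _ => abs_nonneg _) (fun i _ => by
        calc |⟪e i, f i⟫| ≤ ‖e i‖ * ‖f i‖ := abs_real_inner_le_norm _ _
          _ = ‖f i‖ := by rw [e.orthonormal.1 i, one_mul])

lemma hadamard_matrix (m : ℕ) (M : Matrix (Fin m) (Fin m) ℝ)
    (h : ∀ i j, |M i j| = 1) : |M.det| ≤ Real.sqrt m ^ m := by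
  set f : Fin m → EuclideanSpace ℝ (Fin m) := fun i => (WithLp.equiv 2 (Fin m → ℝ)).symm (M i)
  have hdet : (EuclideanSpace.basisFun (Fin m) ℝ).toBasis.det f = M.det := by
    rw [Basis.det_apply, ← Matrix.det_transpose M]
    have : (EuclideanSpace.basisFun (Fin m) ℝ).toBasis.toMatrix f = M.transpose := by
      ext i j
      simp [Basis.toMatrix_apply, f, Matrix.transpose_apply]
    rw [this]
  have hnorm : ∀ i, ‖f i‖ = Real.sqrt m := by
    intro i
    rw [EuclideanSpace.norm_eq]
    congr 1
    simp only [f]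
    calc ∑ j, ‖M i j‖ ^ 2 = ∑ j : Fin m, (1:ℝ) := by
          refine Finset.sum_congr rfl fun j _ => ?_
          rw [Real.norm_eq_abs, h i j, one_pow]
      _ = m := by simp
  calc |M.det| = |(EuclideanSpace.basisFun (Fin m) ℝ).toBasis.det f| := by rw [hdet]
    _ ≤ ∏ i, ‖f i‖ := hadamard_aux m f
    _ = Real.sqrt m ^ m := by simp [hnorm]

/-- Hadamard-type bound: every `n×n` matrix with entries in `{0,1}` has absolute
determinant at most `2((n+1)/4)^((n+1)/2)`. -/
theorem stmt_9 (n : ℕ) (A : Matrix (Fin n) (Fin n) ℝ)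
    (hA : ∀ i j, A i j = 0 ∨ A i j = 1) :
    |A.det| ≤ 2 * (((n : ℝ) + 1) / 4) ^ (((n : ℝ) + 1) / 2) := by
  set B : Matrix (Fin (n+1)) (Fin (n+1)) ℝ :=
    Matrix.of (Fin.cons (fun _ => 1) (fun i => Fin.cons 1 (fun j => 1 - 2 * A i j))) with hB
  set B' : Matrix (Fin (n+1)) (Fin (n+1)) ℝ :=
    Matrix.of (Fin.cons (fun _ => 1) (fun i => Fin.cons 0 (fun j => -2 * A i j))) with hB'
  have hdetBB' : B.det = B'.det := by
    apply Matrix.det_eq_of_forall_row_eq_smul_add_const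
      (fun i => if i = 0 then 0 else 1) 0 (by simp)
    intro i j
    refine Fin.cases ?_ (fun i => ?_) i
    · simp [B, B']
    · refine Fin.cases ?_ (fun j => ?_) j
      · simp [B, B', Fin.succ_ne_zero]
      · simp [B, B', Fin.succ_ne_zero]
        ring
  have hsub : B'.submatrix Fin.succ Fin.succ = (-2 : ℝ) • A := by
    ext i j
    simp [B', Matrix.smul_apply]
  have hdetB' : B'.det = (-2)^n * A.det := by
    rw [Matrix.det_succ_column_zero, Finset.sum_eq_single 0]
    · rw [Fin.succAbove_zero, hsub, Matrix.det_smul]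
      simp [B']
    · intro i _ hi
      have : B' i 0 = 0 := by
        rcases Fin.eq_zero_or_eq_succ i with rfl | ⟨k, rfl⟩
        · exact absurd rfl hi
        · simp [B']
      simp [this]
    · simp
  have hpm : ∀ i j, |B i j| = 1 := by
    intro i j
    refine Fin.cases ?_ (fun i => ?_) i
    · simp [B]
    · refine Fin.cases ?_ (fun j => ?_) j
      · simp [B]
      · rcases hA i j with h | h <;> simp [B, h] <;> norm_num
  have hBound : |B.det| ≤ Real.sqrt ((n:ℝ)+1) ^ (n+1) := by
    have := hadamard_matrix (n+1) B hpm
    rwa [show ((n+1:ℕ):ℝ) = (n:ℝ)+1 by push_cast; ring] at this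
  have habs : |B.det| = 2^n * |A.det| := by
    rw [hdetBB', hdetB', abs_mul, abs_pow, abs_neg]
    norm_num
  have hx : (0:ℝ) ≤ (n:ℝ) + 1 := by positivity
  have h4 : (4:ℝ) ^ (((n:ℝ)+1)/2) = 2 ^ (n+1 : ℕ) := by
    rw [show (4:ℝ) = 2^((2:ℕ):ℝ) by
        rw [Real.rpow_natCast]; norm_num,
      ← Real.rpow_mul (by norm_num)]
    rw [show ((2:ℕ):ℝ) * (((n:ℝ)+1)/2) = (((n+1:ℕ):ℝ)) by push_cast; ring, Real.rpow_natCast]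
  have hs : ((n:ℝ)+1) ^ (((n:ℝ)+1)/2) = Real.sqrt ((n:ℝ)+1) ^ (n+1:ℕ) := by
    rw [Real.sqrt_eq_rpow, ← Real.rpow_natCast (((n:ℝ)+1) ^ ((1:ℝ)/2)) (n+1),
      ← Real.rpow_mul hx]
    congr 1
    push_cast
    ring
  have hRHS : 2 * (((n:ℝ)+1)/4) ^ (((n:ℝ)+1)/2) = Real.sqrt ((n:ℝ)+1) ^ (n+1:ℕ) / 2^(n:ℕ) := by
    rw [Real.div_rpow hx (by norm_num), h4, hs, pow_succ]
    have h2n : (2:ℝ)^(n:ℕ) ≠ 0 := by positivity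
    field_simp
    ring
  rw [hRHS]
  rw [le_div_iff₀ (by positivity)]
  calc |A.det| * 2^(n:ℕ) = |B.det| := by rw [habs]; ring
    _ ≤ Real.sqrt ((n:ℝ)+1) ^ (n+1) := hBound
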